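/- Let F be a field and n ≥ 5. Then D_n(F) is a maximal i-reversible subring of T_n(F): D_n(F) is i-reversible, and every subring of T_n(F) strictly containing D_n(F) is not i-reversible. -/

import Mathlib

/-- A ring is *i-reversible* if whenever `a * b` is a non-zero idempotent, `b * a` is an
idempotent. -/
def IsIReversible (S : Type*) [Ring S] : Prop :=
  ∀ a b : S, IsIdempotentElem (a * b) → a * b ≠ 0 → IsIdempotentElem (b * a)

/-- A ring is *reversible* if `a * b = 0` implies `b * a = 0`. -/
def IsReversible (S : Type*) [Ring S] : Prop :=
  ∀ a b : S, a * b = 0 → b * a = 0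

/-- A ring has only trivial idempotents if its only idempotents are `0` and `1`. -/
def HasOnlyTrivialIdempotents (S : Type*) [Ring S] : Prop :=
  ∀ e : S, IsIdempotentElem e → e = 0 ∨ e = 1

/-- Upper triangular predicate for square matrices. -/
def Matrix.IsUpperTri {n : ℕ} {R : Type*} [Zero R] (A : Matrix (Fin n) (Fin n) R) : Prop :=
  ∀ ⦃i j : Fin n⦄, j < i → A i j = 0

lemma Matrix.IsUpperTri.mul {n : ℕ} {R : Type*} [Ring R]
    {A B : Matrix (Fin n) (Fin n) R} (hA : A.IsUpperTri) (hB : B.IsUpperTri) :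
    (A * B).IsUpperTri := by
  intro i j h
  rw [Matrix.mul_apply]
  refine Finset.sum_eq_zero fun k _ => ?_
  rcases lt_or_ge k i with hk | hk
  · rw [hA hk, zero_mul]
  · rw [hB (lt_of_lt_of_le h hk), mul_zero]

/-- The ring `T_n(R)` of upper triangular `n × n` matrices, as a subring of the matrix ring. -/
def triangularRing (n : ℕ) (R : Type*) [Ring R] :
    Subring (Matrix (Fin n) (Fin n) R) where
  carrier := {A | A.IsUpperTri}
  mul_mem' ha hb := ha.mul hb
  one_mem' := fun i j h => by simp [Matrix.one_apply, (ne_of_lt h).symm]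
  add_mem' ha hb := fun i j h => by simp [Matrix.add_apply, ha h, hb h]
  zero_mem' := fun i j h => rfl
  neg_mem' ha := fun i j h => by simp [ha h]

lemma diag_mul_upperTri {n : ℕ} {R : Type*} [Ring R]
    {A B : Matrix (Fin n) (Fin n) R} (hA : A.IsUpperTri)
    (hB : B.IsUpperTri) (i : Fin n) : (A * B) i i = A i i * B i i := by
  rw [Matrix.mul_apply]
  refine Finset.sum_eq_single i (fun k _ hk => ?_) (by simp)
  rcases lt_or_gt_of_ne hk with h | h
  · rw [hA h, zero_mul]
  · rw [hB h, mul_zero]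

/-- The ring `D_n(R)` of upper triangular `n × n` matrices with constant diagonal. -/
def constDiagRing (n : ℕ) (R : Type*) [Ring R] :
    Subring (Matrix (Fin n) (Fin n) R) where
  carrier := {A | A.IsUpperTri ∧ ∀ i j : Fin n, A i i = A j j}
  mul_mem' := by
    rintro A B ⟨hA, hA'⟩ ⟨hB, hB'⟩
    refine ⟨hA.mul hB, fun i j => ?_⟩
    rw [diag_mul_upperTri hA hB, diag_mul_upperTri hA hB, hA' i j, hB' i j]
  one_mem' := ⟨fun i j h => by simp [Matrix.one_apply, (ne_of_lt h).symm], by simp⟩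
  add_mem' := by
    rintro A B ⟨hA, hA'⟩ ⟨hB, hB'⟩
    exact ⟨fun i j h => by simp [Matrix.add_apply, hA h, hB h],
      fun i j => by simp [Matrix.add_apply, hA' i j, hB' i j]⟩
  zero_mem' := ⟨fun i j h => rfl, by simp⟩
  neg_mem' := by
    rintro A ⟨hA, hA'⟩
    exact ⟨fun i j h => by simp [hA h], fun i j => by simp [hA' i j]⟩

lemma strict_pow_apply {n : ℕ} {R : Type*} [Ring R] (X : Matrix (Fin n) (Fin n) R)
    (h : ∀ i j : Fin n, (j : ℕ) ≤ i → X i j = 0) :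
    ∀ (k : ℕ) (i j : Fin n), (j : ℕ) < (i : ℕ) + k → (X ^ k) i j = 0 := by
  intro k
  induction k with
  | zero =>
    intro i j hij
    simp only [pow_zero]
    exact Matrix.one_apply_ne (by rintro rfl; omega)
  | succ k ih =>
    intro i j hij
    rw [pow_succ', Matrix.mul_apply]
    refine Finset.sum_eq_zero fun l _ => ?_
    rcases le_or_gt (l : ℕ) (i : ℕ) with hl | hl
    · rw [h i l hl, zero_mul]
    · rw [ih l j (by omega), mul_zero]

lemma strict_pow_eq_zero {n : ℕ} {R : Type*} [Ring R] (X : Matrix (Fin n) (Fin n) R)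
    (h : ∀ i j : Fin n, (j : ℕ) ≤ i → X i j = 0) : X ^ n = 0 := by
  ext i j
  rw [strict_pow_apply X h n i j (by omega)]
  rfl

lemma strict_idem_eq_zero {n : ℕ} (hn : 0 < n) {R : Type*} [Ring R]
    {X : Matrix (Fin n) (Fin n) R}
    (h : ∀ i j : Fin n, (j : ℕ) ≤ i → X i j = 0) (hX : X * X = X) : X = 0 := by
  obtain ⟨m, rfl⟩ : ∃ m, n = m + 1 := ⟨n - 1, by omega⟩
  rw [← IsIdempotentElem.pow_succ_eq m hX, strict_pow_eq_zero X h]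

/-- The only idempotents of `D_n` are `0` and `1`. -/
lemma constDiag_idem {n : ℕ} (hn : 0 < n) {F : Type*} [Field F]
    {e : Matrix (Fin n) (Fin n) F}
    (he : e ∈ constDiagRing n F) (hee : e * e = e) : e = 0 ∨ e = 1 := by
  obtain ⟨hu, hd⟩ := he
  set i0 : Fin n := ⟨0, hn⟩ with hi0
  have hc : e i0 i0 * e i0 i0 = e i0 i0 := by
    conv_rhs => rw [← hee]
    rw [diag_mul_upperTri hu hu]
  have hc01 : e i0 i0 = 0 ∨ e i0 i0 = 1 := by
    rcases eq_or_ne (e i0 i0) 0 with h0 | h0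
    · exact Or.inl h0
    · exact Or.inr (mul_left_cancel₀ h0 (by rw [hc, mul_one]))
  rcases hc01 with h | h
  · left
    refine strict_idem_eq_zero hn (fun i j hij => ?_) hee
    rcases eq_or_lt_of_le hij with heq | hlt
    · have hji : j = i := Fin.ext heq
      rw [hji, hd i i0, h]
    · exact hu hlt
  · right
    have hf : (1 : Matrix (Fin n) (Fin n) F) - e = 0 := by
      refine strict_idem_eq_zero hn (fun i j hij => ?_) ?_
      · rcases eq_or_lt_of_le hij with heq | hlt
        · have hji : j = i := Fin.ext heq
          rw [hji, Matrix.sub_apply, Matrix.one_apply_eq, hd i i0, h, sub_self]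
        · rw [Matrix.sub_apply, Matrix.one_apply_ne (Fin.ne_of_gt hlt), hu hlt, sub_zero]
      · rw [mul_sub, sub_mul, sub_mul, one_mul, one_mul, mul_one, hee]
        abel
    exact (sub_eq_zero.mp hf).symm

/-- `D_n(F)` is i-reversible. -/
lemma constDiag_iRev {n : ℕ} (hn : 0 < n) (F : Type*) [Field F] :
    IsIReversible (constDiagRing n F) := by
  intro a b hab hab0
  have hidem : (a : Matrix (Fin n) (Fin n) F) * b * ((a : Matrix (Fin n) (Fin n) F) * b)
      = (a : Matrix (Fin n) (Fin n) F) * b := by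
    have := congrArg (Subtype.val) hab
    push_cast at this
    exact this
  rcases constDiag_idem hn (mul_mem a.2 b.2) hidem with h | h
  · exact absurd (Subtype.ext (by push_cast; exact h)) hab0
  · have hba : (b : Matrix (Fin n) (Fin n) F) * a = 1 := mul_eq_one_comm.mp h
    have : b * a = 1 := Subtype.ext (by push_cast; exact hba)
    rw [IsIdempotentElem, this, one_mul]
lemma stdBasis_mem_constDiag {n : ℕ} {F : Type*} [Field F] {i j : Fin n} (hij : i < j) (c : F) :
    Matrix.single i j c ∈ constDiagRing n F := by
  constructor
  · intro p q hqp
    refine Matrix.single_apply_of_ne _ _ _ _ _ ?_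
    rintro ⟨rfl, rfl⟩
    exact absurd hij (not_lt.mpr hqp.le)
  · intro p q
    rw [Matrix.single_apply_of_ne _ _ _ _ _ (by rintro ⟨rfl, rfl⟩; exact absurd hij (lt_irrefl _)),
      Matrix.single_apply_of_ne _ _ _ _ _ (by rintro ⟨rfl, rfl⟩; exact absurd hij (lt_irrefl _))]

lemma unit_mul_diag {n : ℕ} {F : Type*} [Field F] {ε : Fin n → F} {i j : Fin n}
    (hj : ε j = 0) : Matrix.single i j (1 : F) * Matrix.diagonal ε = 0 := by
  ext p q
  rw [Matrix.mul_diagonal]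
  rcases eq_or_ne q j with rfl | hq
  · rw [hj, mul_zero]; rfl
  · rw [Matrix.single_apply_of_ne _ _ _ _ _ (by rintro ⟨rfl, rfl⟩; exact hq rfl),
      zero_mul]; rfl

lemma diag_mul_unit {n : ℕ} {F : Type*} [Field F] {ε : Fin n → F} {i j : Fin n}
    (hi : ε i = 0) : Matrix.diagonal ε * Matrix.single i j (1 : F) = 0 := by
  ext p q
  rw [Matrix.diagonal_mul]
  rcases eq_or_ne p i with rfl | hp
  · rw [hi, zero_mul]; rfl
  · rw [Matrix.single_apply_of_ne _ _ _ _ _ (by rintro ⟨rfl, rfl⟩; exact hp rfl),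
      mul_zero]; rfl

/-- The core construction: if a subring `S` of the matrix ring contains `D_n(F)` and a
diagonal `0/1` idempotent which is `1` somewhere and `0` at three positions `p < q < r`,
then `S` is not i-reversible. -/
lemma not_iRev_of_diag_idem {n : ℕ} {F : Type*} [Field F]
    (S : Subring (Matrix (Fin n) (Fin n) F)) (hD : constDiagRing n F ≤ S)
    (ε : Fin n → F) (hε01 : ∀ i, ε i = 0 ∨ ε i = 1) (hεS : Matrix.diagonal ε ∈ S)
    (m : Fin n) (hm : ε m = 1) (p q r : Fin n) (hpq : p < q) (hqr : q < r)
    (hp : ε p = 0) (hq : ε q = 0) (hr : ε r = 0) : ¬ IsIReversible S := by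
  intro hrev
  set Dε := Matrix.diagonal ε with hDε
  set Eqr := Matrix.single q r (1 : F) with hEqr
  set Epq := Matrix.single p q (1 : F) with hEpq
  set Epr := Matrix.single p r (1 : F) with hEpr
  have hrp : r ≠ p := fun h => absurd (hpq.trans hqr) (h ▸ lt_irrefl _)
  have h1 : Dε * Dε = Dε := by
    rw [hDε, Matrix.diagonal_mul_diagonal]
    have : (fun i => ε i * ε i) = ε := funext fun i => by
      rcases hε01 i with h | h <;> rw [h] <;> ring
    rw [this]
  have hab : (Dε + Eqr) * (Dε + Epq) = Dε := by
    rw [add_mul, mul_add, mul_add, h1, diag_mul_unit hp, unit_mul_diag hr,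
      Matrix.single_mul_single_of_ne (h := hrp)]
    simp
  have hba : (Dε + Epq) * (Dε + Eqr) = Dε + Epr := by
    rw [add_mul, mul_add, mul_add, h1, diag_mul_unit hq, unit_mul_diag hq,
      Matrix.single_mul_single_same, one_mul]
    simp [hEpr]
  have hba2 : (Dε + Epr) * (Dε + Epr) = Dε := by
    rw [add_mul, mul_add, mul_add, h1, diag_mul_unit hp, unit_mul_diag hr,
      Matrix.single_mul_single_of_ne (h := hrp)]
    simp
  have hDne : Dε ≠ 0 := by
    intro h
    have := congrFun (congrFun h m) m
    rw [hDε, Matrix.diagonal_apply_eq, hm] at this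
    exact one_ne_zero this
  have ha : Dε + Eqr ∈ S := S.add_mem hεS (hD (stdBasis_mem_constDiag hqr 1))
  have hb : Dε + Epq ∈ S := S.add_mem hεS (hD (stdBasis_mem_constDiag hpq 1))
  set a : S := ⟨Dε + Eqr, ha⟩ with haa
  set b : S := ⟨Dε + Epq, hb⟩ with hbb
  have habS : ((a * b : S) : Matrix (Fin n) (Fin n) F) = Dε := by
    push_cast [haa, hbb]
    exact hab
  have hidem : IsIdempotentElem (a * b) := by
    refine Subtype.ext ?_
    push_cast [habS]
    exact h1
  have hne0 : a * b ≠ 0 := by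
    intro h
    exact hDne (by rw [← habS, h]; rfl)
  have hcontra := hrev a b hidem hne0
  have hbaS : ((b * a : S) : Matrix (Fin n) (Fin n) F) = Dε + Epr := by
    push_cast [haa, hbb]
    exact hba
  have : Dε = Dε + Epr := by
    have h2 := congrArg Subtype.val hcontra
    push_cast [hbaS] at h2
    rw [hba2] at h2
    exact h2
  have := congrFun (congrFun this p) r
  rw [Matrix.add_apply, hEpr, Matrix.single_apply_same, hDε,
    Matrix.diagonal_apply_ne _ (fun h => hrp h.symm)] at this
  simp at this
lemma const_diag_mem {n : ℕ} {F : Type*} [Field F] (c : F) :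
    Matrix.diagonal (fun _ => c) ∈ constDiagRing n F := by
  refine ⟨fun i j h => Matrix.diagonal_apply_ne _ (Fin.ne_of_gt h), fun i j => by simp⟩

open scoped Classical in
/-- Lagrange-interpolation construction of a 0/1 diagonal idempotent inside `S`. -/
lemma diag_idem_mem {n : ℕ} {F : Type*} [Field F]
    (S : Subring (Matrix (Fin n) (Fin n) F)) (hD : constDiagRing n F ≤ S)
    (A : Matrix (Fin n) (Fin n) F) (hAS : A ∈ S) (hAT : A.IsUpperTri) (i0 j0 : Fin n)
    (hne : A i0 i0 ≠ A j0 j0) :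
    Matrix.diagonal (fun i => if A i i - A i0 i0 = A j0 j0 - A i0 i0 then (1 : F) else 0)
      ∈ S := by
  set d' : Fin n → F := fun i => A i i - A i0 i0 with hd'
  set t : F := A j0 j0 - A i0 i0 with htdef
  have ht : t ≠ 0 := sub_ne_zero_of_ne hne.symm
  -- the diagonal part of `A - (A i0 i0) • 1` lies in `S`
  have hDS : Matrix.diagonal d' ∈ S := by
    have hB : A - Matrix.diagonal (fun _ => A i0 i0) ∈ S :=
      S.sub_mem hAS (hD (const_diag_mem _))
    have hU : A - Matrix.diagonal (fun _ => A i0 i0) - Matrix.diagonal d'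
        ∈ constDiagRing n F := by
      constructor
      · intro i j hij
        have hij' : i ≠ j := Fin.ne_of_gt hij
        rw [Matrix.sub_apply, Matrix.sub_apply, hAT hij, Matrix.diagonal_apply_ne _ hij',
          Matrix.diagonal_apply_ne _ hij']
        ring
      · intro i j
        simp [Matrix.sub_apply, hd']
    have heq : Matrix.diagonal d'
        = A - Matrix.diagonal (fun _ => A i0 i0)
          - (A - Matrix.diagonal (fun _ => A i0 i0) - Matrix.diagonal d') := by
      rw [sub_sub_cancel]
    rw [heq]
    exact S.sub_mem hB (hD hU)
  have key : ∀ W : Finset F, Matrix.diagonal (fun i => ∏ v ∈ W, (d' i - v)) ∈ S := by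
    intro W
    induction W using Finset.induction_on with
    | empty => simpa using S.one_mem
    | @insert v W hv ih =>
      have h1 : (fun i => ∏ x ∈ insert v W, (d' i - x))
          = fun i => (d' i - v) * ∏ x ∈ W, (d' i - x) :=
        funext fun i => Finset.prod_insert hv
      have h2 : Matrix.diagonal (fun i => (d' i - v) * ∏ x ∈ W, (d' i - x))
          = (Matrix.diagonal fun i => d' i - v)
            * Matrix.diagonal (fun i => ∏ x ∈ W, (d' i - x)) :=
        (Matrix.diagonal_mul_diagonal _ _).symm
      rw [h1, h2]
      refine S.mul_mem ?_ ih
      have h3 : Matrix.diagonal (fun i => d' i - v)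
          = Matrix.diagonal d' - Matrix.diagonal (fun _ => v) := by
        ext i j
        by_cases h : i = j <;> simp [h, Matrix.diagonal_apply_ne]
      rw [h3]
      exact S.sub_mem hDS (hD (const_diag_mem _))
  set V : Finset F := (Finset.univ.image d').erase t with hV
  set c : F := ∏ v ∈ V, (t - v) with hc
  have hc0 : c ≠ 0 := by
    rw [hc]
    refine Finset.prod_ne_zero_iff.mpr fun v hv => ?_
    exact sub_ne_zero_of_ne (Finset.ne_of_mem_erase hv).symm
  have hMS : Matrix.diagonal (fun i => ∏ v ∈ V, (d' i - v)) ∈ S := key V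
  have hΔ : Matrix.diagonal (fun i => if d' i = t then (1 : F) else 0)
      = Matrix.diagonal (fun _ => c⁻¹) * Matrix.diagonal (fun i => ∏ v ∈ V, (d' i - v)) := by
    rw [Matrix.diagonal_mul_diagonal]
    have hfun : ∀ i, (if d' i = t then (1 : F) else 0) = c⁻¹ * ∏ v ∈ V, (d' i - v) := by
      intro i
      by_cases hi : d' i = t
      · rw [if_pos hi, hi, ← hc, inv_mul_cancel₀ hc0]
      · rw [if_neg hi]
        have hiV : d' i ∈ V :=
          Finset.mem_erase.mpr ⟨hi, Finset.mem_image_of_mem _ (Finset.mem_univ i)⟩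
        rw [Finset.prod_eq_zero hiV (sub_self _), mul_zero]
    exact congrArg _ (funext hfun)
  have hgoal : (fun i => if A i i - A i0 i0 = A j0 j0 - A i0 i0 then (1 : F) else 0)
      = fun i => if d' i = t then (1 : F) else 0 := rfl
  rw [hgoal, hΔ]
  exact S.mul_mem (hD (const_diag_mem _)) hMS

lemma exists_three_ordered {n : ℕ} (s : Finset (Fin n)) (hs : 3 ≤ s.card) :
    ∃ p q r, p ∈ s ∧ q ∈ s ∧ r ∈ s ∧ p < q ∧ q < r := by
  have h0 : s.Nonempty := Finset.card_pos.mp (by omega)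
  set p := s.min' h0 with hp
  set r := s.max' h0 with hr
  have hs' : ((s.erase p).erase r).Nonempty := by
    refine Finset.card_pos.mp ?_
    have h1 := Finset.pred_card_le_card_erase (a := p) (s := s)
    have h2 := Finset.pred_card_le_card_erase (a := r) (s := s.erase p)
    omega
  obtain ⟨q, hq⟩ := hs'
  have hqr : q ≠ r := Finset.ne_of_mem_erase hq
  have hq' := Finset.mem_of_mem_erase hq
  have hqp : q ≠ p := Finset.ne_of_mem_erase hq'
  have hqs : q ∈ s := Finset.mem_of_mem_erase hq'
  exact ⟨p, q, r, s.min'_mem h0, hqs, s.max'_mem h0,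
    lt_of_le_of_ne (s.min'_le q hqs) (Ne.symm hqp), lt_of_le_of_ne (s.le_max' q hqs) hqr⟩
/-- For a field `F` and `n ≥ 5`, `D_n(F)` is a maximal i-reversible subring of `T_n(F)`:
it is i-reversible and every subring of `T_n(F)` strictly containing it fails to be
i-reversible. -/
theorem constDiagRing_maximal_isIReversible (F : Type*) [Field F] (n : ℕ) (hn : 5 ≤ n) :
    IsIReversible (constDiagRing n F) ∧
      ∀ S : Subring (Matrix (Fin n) (Fin n) F), S ≤ triangularRing n F →
        constDiagRing n F < S → ¬ IsIReversible S := by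
  classical
  have hn0 : 0 < n := by omega
  refine ⟨constDiag_iRev hn0 F, ?_⟩
  intro S hST hDS hrev
  obtain ⟨A, hAS, hAD⟩ := SetLike.exists_of_lt hDS
  have hAT : A.IsUpperTri := hST hAS
  have hnc : ∃ i0 j0 : Fin n, A i0 i0 ≠ A j0 j0 := by
    by_contra h
    push_neg at h
    exact hAD ⟨hAT, h⟩
  obtain ⟨i0, j0, hne⟩ := hnc
  set δ : Fin n → F := fun i =>
    if A i i - A i0 i0 = A j0 j0 - A i0 i0 then (1 : F) else 0 with hδ
  have hΔS : Matrix.diagonal δ ∈ S := diag_idem_mem S hDS.le A hAS hAT i0 j0 hne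
  have hδ01 : ∀ i, δ i = 0 ∨ δ i = 1 := fun i => by
    by_cases h : A i i - A i0 i0 = A j0 j0 - A i0 i0
    · exact Or.inr (if_pos h)
    · exact Or.inl (if_neg h)
  have ht : A j0 j0 - A i0 i0 ≠ 0 := sub_ne_zero_of_ne hne.symm
  have hδi0 : δ i0 = 0 := by
    refine if_neg fun h => ht ?_
    rw [← h, sub_self]
  have hδj0 : δ j0 = 1 := if_pos rfl
  set s0 := Finset.univ.filter (fun i => δ i = 0) with hs0
  set s1 := Finset.univ.filter (fun i => δ i = 1) with hs1
  have hcard : s0.card + s1.card = n := by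
    have h1 : s1 = Finset.univ.filter (fun i => ¬ δ i = 0) := by
      refine Finset.filter_congr fun i _ => ?_
      constructor
      · intro h h0; rw [h] at h0; exact one_ne_zero h0
      · intro h; rcases hδ01 i with h0 | h0; exact absurd h0 h; exact h0
    rw [hs0, h1, Finset.card_filter_add_card_filter_not]
    simp
  have h3 : 3 ≤ s0.card ∨ 3 ≤ s1.card := by omega
  rcases h3 with h3 | h3
  · obtain ⟨p, q, r, hp, hq, hr, hpq, hqr⟩ := exists_three_ordered s0 h3
    exact not_iRev_of_diag_idem S hDS.le δ hδ01 hΔS j0 hδj0 p q r hpq hqr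
      (Finset.mem_filter.mp hp).2 (Finset.mem_filter.mp hq).2 (Finset.mem_filter.mp hr).2 hrev
  · obtain ⟨p, q, r, hp, hq, hr, hpq, hqr⟩ := exists_three_ordered s1 h3
    set ε : Fin n → F := fun i => 1 - δ i with hε
    have hεS : Matrix.diagonal ε ∈ S := by
      have h2 : Matrix.diagonal ε = 1 - Matrix.diagonal δ := by
        ext i j
        by_cases h : i = j <;> simp [h, hε, Matrix.one_apply, Matrix.diagonal_apply_ne]
      rw [h2]
      exact S.sub_mem S.one_mem hΔS
    have hε01 : ∀ i, ε i = 0 ∨ ε i = 1 := fun i => by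
      rcases hδ01 i with h | h <;> simp [hε, h]
    have hzero : ∀ x, x ∈ s1 → ε x = 0 := fun x hx => by
      rw [hε]
      simp only
      rw [(Finset.mem_filter.mp hx).2, sub_self]
    exact not_iRev_of_diag_idem S hDS.le ε hε01 hεS i0
      (by rw [hε]; simp only; rw [hδi0, sub_zero]) p q r hpq hqr
      (hzero p hp) (hzero q hq) (hzero r hr) hrev
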